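/- If a hypergraph E is such that for every vertex v ∈ ⋃E the family E_v := {S ∈ E : v ∈ S} is finite, then E has a minimal cover. -/

import Mathlib

/-- `C` is a cover of the hypergraph `E`. -/
def IsCover {α : Type*} (E C : Set (Set α)) : Prop :=
  C ⊆ E ∧ ⋃₀ C = ⋃₀ E

/-- `C` is a minimal cover of the hypergraph `E`. -/
def IsMinimalCover {α : Type*} (E C : Set (Set α)) : Prop :=
  IsCover E C ∧ ∀ D ⊆ C, IsCover E D → D = C

/-- `S` is a subhypergraph of `E`. -/
def IsSubhypergraph {α : Type*} (E S : Set (Set α)) : Prop :=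
  ∃ F ⊆ E, ∃ A ⊆ ⋃₀ F, S = (fun T => T ∩ A) '' F

/-- `S` has a maximal edge. -/
def HasMaximalEdge {α : Type*} (S : Set (Set α)) : Prop :=
  ∃ M ∈ S, ∀ T ∈ S, M ⊆ T → T = M

/-- `S` is isomorphic to the hypergraph ω, whose vertex set is ℕ and whose
edges are the initial segments `{0, …, n-1}` for `n : ℕ`. -/
def IsoToOmega {α : Type*} (S : Set (Set α)) : Prop :=
  ∃ f : ℕ → α, Function.Injective f ∧ Set.range f = ⋃₀ S ∧
    S = {T | ∃ n : ℕ, T = f '' Set.Iio n}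

theorem stmt_9 {α : Type*} (E : Set (Set α))
    (h : ∀ v ∈ ⋃₀ E, {S ∈ E | v ∈ S}.Finite) :
    ∃ C, IsMinimalCover E C := by
  have key : ∀ c ⊆ {C | IsCover E C}, IsChain (· ⊆ ·) c →
      ∃ lb ∈ {C | IsCover E C}, ∀ s ∈ c, lb ⊆ s := by
    intro c hcS hchain
    rcases c.eq_empty_or_nonempty with rfl | ⟨C₀, hC₀⟩
    · exact ⟨E, ⟨le_refl E, rfl⟩, by simp⟩
    refine ⟨⋂₀ c, ⟨(Set.sInter_subset_of_mem hC₀).trans (hcS hC₀).1, ?_⟩,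
      fun s hs => Set.sInter_subset_of_mem hs⟩
    apply Set.Subset.antisymm
    · exact Set.sUnion_subset_sUnion ((Set.sInter_subset_of_mem hC₀).trans (hcS hC₀).1)
    · intro v hv
      set Fv := {S ∈ E | v ∈ S} with hFv
      have hFvfin : Fv.Finite := h v hv
      have hne : ∀ C ∈ c, (C ∩ Fv).Nonempty := by
        intro C hC
        have hv' : v ∈ ⋃₀ C := ((hcS hC).2).symm ▸ hv
        obtain ⟨S, hSC, hvS⟩ := hv'
        exact ⟨S, hSC, (hcS hC).1 hSC, hvS⟩
      have hIfin : ((fun C => C ∩ Fv) '' c).Finite :=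
        hFvfin.finite_subsets.subset (by rintro _ ⟨C, -, rfl⟩; exact Set.inter_subset_right)
      obtain ⟨Cm, hCm, hmin⟩ :=
        Set.Finite.exists_minimalFor' (fun C => C ∩ Fv) c hIfin ⟨C₀, hC₀⟩
      obtain ⟨S, hSCm, hSE, hvS⟩ := hne Cm hCm
      refine ⟨S, ?_, hvS⟩
      intro C hC
      rcases hchain.total hCm hC with hle | hle
      · exact hle hSCm
      · have heq : Cm ∩ Fv = C ∩ Fv :=
          le_antisymm (hmin hC (Set.inter_subset_inter_left _ hle))
            (Set.inter_subset_inter_left _ hle)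
        have hm : S ∈ C ∩ Fv := heq ▸ ⟨hSCm, hSE, hvS⟩
        exact hm.1
  obtain ⟨m, hm⟩ := zorn_superset {C | IsCover E C} key
  exact ⟨m, hm.prop, fun D hDm hD => hm.eq_of_subset hD hDm⟩
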